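/- Let G be a finite simple chordal graph that is P_7-free, and let IR be an irredundant set of G. Then for every A ⊆ RN = V(G) \ IR, A belongs to D_RN(G) if and only if every x ∈ A has an irredundant private neighbor in some irredundant component entirely dominated by A; that is, for every x ∈ A there exists an irredundant component C of G with C ⊆ N(A) and Priv_IR(A,x) ∩ C ≠ ∅. -/

import Mathlib

variable {V : Type*}

/-- The closed neighborhood `N[x]` of a vertex. -/
def cnbr (G : SimpleGraph V) (x : V) : Set V := insert x (G.neighborSet x)

/-- `N[X] = ⋃ x ∈ X, N[x]`. -/
def cnbrSet (G : SimpleGraph V) (X : Set V) : Set V := ⋃ x ∈ X, cnbr G x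

/-- `N(X) = N[X] \ X`. -/
def onbrSet (G : SimpleGraph V) (X : Set V) : Set V := cnbrSet G X \ X

/-- `D` dominates `X` if `X ⊆ N[D]`. -/
def Dominates (G : SimpleGraph V) (D X : Set V) : Prop := X ⊆ cnbrSet G D

/-- `D` is a minimal dominating set of `G`. -/
def IsMinDomSet (G : SimpleGraph V) (D : Set V) : Prop :=
  Dominates G D Set.univ ∧ ∀ D' : Set V, D' ⊂ D → ¬ Dominates G D' Set.univ

/-- `Priv(D, x)`: private neighbors of `x` w.r.t. `D`. -/
def priv (G : SimpleGraph V) (D : Set V) (x : V) : Set V := {u | cnbr G u ∩ D = {x}}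

/-- `IR` is an irredundant set of `G`. -/
def IsIrredundantSet (G : SimpleGraph V) (IR : Set V) : Prop :=
  (∀ v : V, ∃ x ∈ IR, cnbr G x ⊆ cnbr G v) ∧
  (∀ x ∈ IR, ∀ v : V, ¬ cnbr G v ⊂ cnbr G x) ∧
  (∀ x ∈ IR, ∀ y ∈ IR, x ≠ y → cnbr G x ≠ cnbr G y)

/-- `Priv_IR(D, x) = Priv(D, x) ∩ IR`. -/
def privIR (G : SimpleGraph V) (IR D : Set V) (x : V) : Set V := priv G D x ∩ IR

/-- `A ∈ D_RN(G)`: `A` is the intersection of a minimal dominating set with `RN = V \ IR`. -/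
def memDRN (G : SimpleGraph V) (IR A : Set V) : Prop :=
  ∃ D : Set V, IsMinDomSet G D ∧ A = D ∩ IRᶜ

/-- `G` is `P_k`-free: it has no induced path on `k` vertices. -/
def PkFree (G : SimpleGraph V) (k : ℕ) : Prop :=
  ¬ ∃ f : Fin k → V, Function.Injective f ∧
      ∀ i j : Fin k, G.Adj (f i) (f j) ↔ (i.val + 1 = j.val ∨ j.val + 1 = i.val)

/-- `G` is chordal: no induced cycle on `n ≥ 4` vertices. -/
def Chordal (G : SimpleGraph V) : Prop :=
  ∀ n : ℕ, 4 ≤ n → ¬ ∃ f : ZMod n → V, Function.Injective f ∧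
      ∀ i j : ZMod n, G.Adj (f i) (f j) ↔ (i = j + 1 ∨ j = i + 1)

/-- `C` is a connected component of the subgraph of `G` induced by `S`. -/
def IsCompOf (G : SimpleGraph V) (S C : Set V) : Prop :=
  C ⊆ S ∧ C.Nonempty ∧ (G.induce C).Connected ∧
    ∀ x ∈ C, ∀ y ∈ S, G.Adj x y → y ∈ C

/-- `B(A)`: the elements of `A` having an irredundant private neighbor in some irredundant
component entirely contained in `N(A)`. -/
def Bset (G : SimpleGraph V) (IR A : Set V) : Set V :=
  {a ∈ A | ∃ C : Set V, IsCompOf G IR C ∧ C ⊆ onbrSet G A ∧ (privIR G IR A a ∩ C).Nonempty}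

/-- Domination inside the subgraph induced by `C`: every `u ∈ X` equals, or is adjacent
(within `C`) to, some `d ∈ D`.  For `D, X ⊆ C` this is domination in `G[C]`. -/
def domIn (G : SimpleGraph V) (C D X : Set V) : Prop :=
  ∀ u ∈ X, ∃ d ∈ D, u = d ∨ (G.Adj d u ∧ d ∈ C ∧ u ∈ C)


variable {G : SimpleGraph V}
lemma noC4 (hch : Chordal G) (p0 p1 p2 p3 : V)
    (a01 : G.Adj p0 p1) (a12 : G.Adj p1 p2) (a23 : G.Adj p2 p3) (a30 : G.Adj p3 p0) (n02 : ¬ G.Adj p0 p2) (n13 : ¬ G.Adj p1 p3) (d02 : p0 ≠ p2) (d13 : p1 ≠ p3) : False := by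
  have A0_1 : G.Adj p0 p1 := a01
  have A1_0 : G.Adj p1 p0 := a01.symm
  have D0_1 : p0 ≠ p1 := G.ne_of_adj a01
  have D1_0 : p1 ≠ p0 := (G.ne_of_adj a01).symm
  have A1_2 : G.Adj p1 p2 := a12
  have A2_1 : G.Adj p2 p1 := a12.symm
  have D1_2 : p1 ≠ p2 := G.ne_of_adj a12
  have D2_1 : p2 ≠ p1 := (G.ne_of_adj a12).symm
  have A2_3 : G.Adj p2 p3 := a23
  have A3_2 : G.Adj p3 p2 := a23.symm
  have D2_3 : p2 ≠ p3 := G.ne_of_adj a23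
  have D3_2 : p3 ≠ p2 := (G.ne_of_adj a23).symm
  have A3_0 : G.Adj p3 p0 := a30
  have A0_3 : G.Adj p0 p3 := a30.symm
  have D3_0 : p3 ≠ p0 := G.ne_of_adj a30
  have D0_3 : p0 ≠ p3 := (G.ne_of_adj a30).symm
  have N0_2 : ¬ G.Adj p0 p2 := n02
  have N2_0 : ¬ G.Adj p2 p0 := fun h => n02 h.symm
  have E0_2 : p0 ≠ p2 := d02
  have E2_0 : p2 ≠ p0 := d02.symm
  have N1_3 : ¬ G.Adj p1 p3 := n13
  have N3_1 : ¬ G.Adj p3 p1 := fun h => n13 h.symm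
  have E1_3 : p1 ≠ p3 := d13
  have E3_1 : p3 ≠ p1 := d13.symm
  have hc : ∀ i : ZMod 4, i = 0 ∨ i = 1 ∨ i = 2 ∨ i = 3 := by decide
  refine hch 4 (by norm_num) ⟨![p0, p1, p2, p3], ?_, ?_⟩
  · intro x y hxy
    rcases hc x with rfl|rfl|rfl|rfl <;> rcases hc y with rfl|rfl|rfl|rfl
    · rfl
    · exact absurd hxy D0_1
    · exact absurd hxy E0_2
    · exact absurd hxy D0_3
    · exact absurd hxy D1_0
    · rfl
    · exact absurd hxy D1_2
    · exact absurd hxy E1_3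
    · exact absurd hxy E2_0
    · exact absurd hxy D2_1
    · rfl
    · exact absurd hxy D2_3
    · exact absurd hxy D3_0
    · exact absurd hxy E3_1
    · exact absurd hxy D3_2
    · rfl
  · intro i j
    rcases hc i with rfl|rfl|rfl|rfl <;> rcases hc j with rfl|rfl|rfl|rfl
    · exact iff_of_false (G.loopless.irrefl _) (by decide)
    · exact iff_of_true A0_1 (by decide)
    · exact iff_of_false N0_2 (by decide)
    · exact iff_of_true A0_3 (by decide)
    · exact iff_of_true A1_0 (by decide)
    · exact iff_of_false (G.loopless.irrefl _) (by decide)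
    · exact iff_of_true A1_2 (by decide)
    · exact iff_of_false N1_3 (by decide)
    · exact iff_of_false N2_0 (by decide)
    · exact iff_of_true A2_1 (by decide)
    · exact iff_of_false (G.loopless.irrefl _) (by decide)
    · exact iff_of_true A2_3 (by decide)
    · exact iff_of_true A3_0 (by decide)
    · exact iff_of_false N3_1 (by decide)
    · exact iff_of_true A3_2 (by decide)
    · exact iff_of_false (G.loopless.irrefl _) (by decide)

lemma noC5 (hch : Chordal G) (p0 p1 p2 p3 p4 : V)
    (a01 : G.Adj p0 p1) (a12 : G.Adj p1 p2) (a23 : G.Adj p2 p3) (a34 : G.Adj p3 p4) (a40 : G.Adj p4 p0) (n02 : ¬ G.Adj p0 p2) (n03 : ¬ G.Adj p0 p3) (n13 : ¬ G.Adj p1 p3) (n14 : ¬ G.Adj p1 p4) (n24 : ¬ G.Adj p2 p4) (d02 : p0 ≠ p2) (d03 : p0 ≠ p3) (d13 : p1 ≠ p3) (d14 : p1 ≠ p4) (d24 : p2 ≠ p4) : False := by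
  have A0_1 : G.Adj p0 p1 := a01
  have A1_0 : G.Adj p1 p0 := a01.symm
  have D0_1 : p0 ≠ p1 := G.ne_of_adj a01
  have D1_0 : p1 ≠ p0 := (G.ne_of_adj a01).symm
  have A1_2 : G.Adj p1 p2 := a12
  have A2_1 : G.Adj p2 p1 := a12.symm
  have D1_2 : p1 ≠ p2 := G.ne_of_adj a12
  have D2_1 : p2 ≠ p1 := (G.ne_of_adj a12).symm
  have A2_3 : G.Adj p2 p3 := a23
  have A3_2 : G.Adj p3 p2 := a23.symm
  have D2_3 : p2 ≠ p3 := G.ne_of_adj a23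
  have D3_2 : p3 ≠ p2 := (G.ne_of_adj a23).symm
  have A3_4 : G.Adj p3 p4 := a34
  have A4_3 : G.Adj p4 p3 := a34.symm
  have D3_4 : p3 ≠ p4 := G.ne_of_adj a34
  have D4_3 : p4 ≠ p3 := (G.ne_of_adj a34).symm
  have A4_0 : G.Adj p4 p0 := a40
  have A0_4 : G.Adj p0 p4 := a40.symm
  have D4_0 : p4 ≠ p0 := G.ne_of_adj a40
  have D0_4 : p0 ≠ p4 := (G.ne_of_adj a40).symm
  have N0_2 : ¬ G.Adj p0 p2 := n02
  have N2_0 : ¬ G.Adj p2 p0 := fun h => n02 h.symm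
  have E0_2 : p0 ≠ p2 := d02
  have E2_0 : p2 ≠ p0 := d02.symm
  have N0_3 : ¬ G.Adj p0 p3 := n03
  have N3_0 : ¬ G.Adj p3 p0 := fun h => n03 h.symm
  have E0_3 : p0 ≠ p3 := d03
  have E3_0 : p3 ≠ p0 := d03.symm
  have N1_3 : ¬ G.Adj p1 p3 := n13
  have N3_1 : ¬ G.Adj p3 p1 := fun h => n13 h.symm
  have E1_3 : p1 ≠ p3 := d13
  have E3_1 : p3 ≠ p1 := d13.symm
  have N1_4 : ¬ G.Adj p1 p4 := n14
  have N4_1 : ¬ G.Adj p4 p1 := fun h => n14 h.symm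
  have E1_4 : p1 ≠ p4 := d14
  have E4_1 : p4 ≠ p1 := d14.symm
  have N2_4 : ¬ G.Adj p2 p4 := n24
  have N4_2 : ¬ G.Adj p4 p2 := fun h => n24 h.symm
  have E2_4 : p2 ≠ p4 := d24
  have E4_2 : p4 ≠ p2 := d24.symm
  have hc : ∀ i : ZMod 5, i = 0 ∨ i = 1 ∨ i = 2 ∨ i = 3 ∨ i = 4 := by decide
  refine hch 5 (by norm_num) ⟨![p0, p1, p2, p3, p4], ?_, ?_⟩
  · intro x y hxy
    rcases hc x with rfl|rfl|rfl|rfl|rfl <;> rcases hc y with rfl|rfl|rfl|rfl|rfl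
    · rfl
    · exact absurd hxy D0_1
    · exact absurd hxy E0_2
    · exact absurd hxy E0_3
    · exact absurd hxy D0_4
    · exact absurd hxy D1_0
    · rfl
    · exact absurd hxy D1_2
    · exact absurd hxy E1_3
    · exact absurd hxy E1_4
    · exact absurd hxy E2_0
    · exact absurd hxy D2_1
    · rfl
    · exact absurd hxy D2_3
    · exact absurd hxy E2_4
    · exact absurd hxy E3_0
    · exact absurd hxy E3_1
    · exact absurd hxy D3_2
    · rfl
    · exact absurd hxy D3_4
    · exact absurd hxy D4_0
    · exact absurd hxy E4_1
    · exact absurd hxy E4_2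
    · exact absurd hxy D4_3
    · rfl
  · intro i j
    rcases hc i with rfl|rfl|rfl|rfl|rfl <;> rcases hc j with rfl|rfl|rfl|rfl|rfl
    · exact iff_of_false (G.loopless.irrefl _) (by decide)
    · exact iff_of_true A0_1 (by decide)
    · exact iff_of_false N0_2 (by decide)
    · exact iff_of_false N0_3 (by decide)
    · exact iff_of_true A0_4 (by decide)
    · exact iff_of_true A1_0 (by decide)
    · exact iff_of_false (G.loopless.irrefl _) (by decide)
    · exact iff_of_true A1_2 (by decide)
    · exact iff_of_false N1_3 (by decide)
    · exact iff_of_false N1_4 (by decide)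
    · exact iff_of_false N2_0 (by decide)
    · exact iff_of_true A2_1 (by decide)
    · exact iff_of_false (G.loopless.irrefl _) (by decide)
    · exact iff_of_true A2_3 (by decide)
    · exact iff_of_false N2_4 (by decide)
    · exact iff_of_false N3_0 (by decide)
    · exact iff_of_false N3_1 (by decide)
    · exact iff_of_true A3_2 (by decide)
    · exact iff_of_false (G.loopless.irrefl _) (by decide)
    · exact iff_of_true A3_4 (by decide)
    · exact iff_of_true A4_0 (by decide)
    · exact iff_of_false N4_1 (by decide)
    · exact iff_of_false N4_2 (by decide)
    · exact iff_of_true A4_3 (by decide)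
    · exact iff_of_false (G.loopless.irrefl _) (by decide)

lemma noC6 (hch : Chordal G) (p0 p1 p2 p3 p4 p5 : V)
    (a01 : G.Adj p0 p1) (a12 : G.Adj p1 p2) (a23 : G.Adj p2 p3) (a34 : G.Adj p3 p4) (a45 : G.Adj p4 p5) (a50 : G.Adj p5 p0) (n02 : ¬ G.Adj p0 p2) (n03 : ¬ G.Adj p0 p3) (n04 : ¬ G.Adj p0 p4) (n13 : ¬ G.Adj p1 p3) (n14 : ¬ G.Adj p1 p4) (n15 : ¬ G.Adj p1 p5) (n24 : ¬ G.Adj p2 p4) (n25 : ¬ G.Adj p2 p5) (n35 : ¬ G.Adj p3 p5) (d02 : p0 ≠ p2) (d03 : p0 ≠ p3) (d04 : p0 ≠ p4) (d13 : p1 ≠ p3) (d14 : p1 ≠ p4) (d15 : p1 ≠ p5) (d24 : p2 ≠ p4) (d25 : p2 ≠ p5) (d35 : p3 ≠ p5) : False := by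
  have A0_1 : G.Adj p0 p1 := a01
  have A1_0 : G.Adj p1 p0 := a01.symm
  have D0_1 : p0 ≠ p1 := G.ne_of_adj a01
  have D1_0 : p1 ≠ p0 := (G.ne_of_adj a01).symm
  have A1_2 : G.Adj p1 p2 := a12
  have A2_1 : G.Adj p2 p1 := a12.symm
  have D1_2 : p1 ≠ p2 := G.ne_of_adj a12
  have D2_1 : p2 ≠ p1 := (G.ne_of_adj a12).symm
  have A2_3 : G.Adj p2 p3 := a23
  have A3_2 : G.Adj p3 p2 := a23.symm
  have D2_3 : p2 ≠ p3 := G.ne_of_adj a23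
  have D3_2 : p3 ≠ p2 := (G.ne_of_adj a23).symm
  have A3_4 : G.Adj p3 p4 := a34
  have A4_3 : G.Adj p4 p3 := a34.symm
  have D3_4 : p3 ≠ p4 := G.ne_of_adj a34
  have D4_3 : p4 ≠ p3 := (G.ne_of_adj a34).symm
  have A4_5 : G.Adj p4 p5 := a45
  have A5_4 : G.Adj p5 p4 := a45.symm
  have D4_5 : p4 ≠ p5 := G.ne_of_adj a45
  have D5_4 : p5 ≠ p4 := (G.ne_of_adj a45).symm
  have A5_0 : G.Adj p5 p0 := a50
  have A0_5 : G.Adj p0 p5 := a50.symm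
  have D5_0 : p5 ≠ p0 := G.ne_of_adj a50
  have D0_5 : p0 ≠ p5 := (G.ne_of_adj a50).symm
  have N0_2 : ¬ G.Adj p0 p2 := n02
  have N2_0 : ¬ G.Adj p2 p0 := fun h => n02 h.symm
  have E0_2 : p0 ≠ p2 := d02
  have E2_0 : p2 ≠ p0 := d02.symm
  have N0_3 : ¬ G.Adj p0 p3 := n03
  have N3_0 : ¬ G.Adj p3 p0 := fun h => n03 h.symm
  have E0_3 : p0 ≠ p3 := d03
  have E3_0 : p3 ≠ p0 := d03.symm
  have N0_4 : ¬ G.Adj p0 p4 := n04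
  have N4_0 : ¬ G.Adj p4 p0 := fun h => n04 h.symm
  have E0_4 : p0 ≠ p4 := d04
  have E4_0 : p4 ≠ p0 := d04.symm
  have N1_3 : ¬ G.Adj p1 p3 := n13
  have N3_1 : ¬ G.Adj p3 p1 := fun h => n13 h.symm
  have E1_3 : p1 ≠ p3 := d13
  have E3_1 : p3 ≠ p1 := d13.symm
  have N1_4 : ¬ G.Adj p1 p4 := n14
  have N4_1 : ¬ G.Adj p4 p1 := fun h => n14 h.symm
  have E1_4 : p1 ≠ p4 := d14
  have E4_1 : p4 ≠ p1 := d14.symm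
  have N1_5 : ¬ G.Adj p1 p5 := n15
  have N5_1 : ¬ G.Adj p5 p1 := fun h => n15 h.symm
  have E1_5 : p1 ≠ p5 := d15
  have E5_1 : p5 ≠ p1 := d15.symm
  have N2_4 : ¬ G.Adj p2 p4 := n24
  have N4_2 : ¬ G.Adj p4 p2 := fun h => n24 h.symm
  have E2_4 : p2 ≠ p4 := d24
  have E4_2 : p4 ≠ p2 := d24.symm
  have N2_5 : ¬ G.Adj p2 p5 := n25
  have N5_2 : ¬ G.Adj p5 p2 := fun h => n25 h.symm
  have E2_5 : p2 ≠ p5 := d25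
  have E5_2 : p5 ≠ p2 := d25.symm
  have N3_5 : ¬ G.Adj p3 p5 := n35
  have N5_3 : ¬ G.Adj p5 p3 := fun h => n35 h.symm
  have E3_5 : p3 ≠ p5 := d35
  have E5_3 : p5 ≠ p3 := d35.symm
  have hc : ∀ i : ZMod 6, i = 0 ∨ i = 1 ∨ i = 2 ∨ i = 3 ∨ i = 4 ∨ i = 5 := by decide
  refine hch 6 (by norm_num) ⟨![p0, p1, p2, p3, p4, p5], ?_, ?_⟩
  · intro x y hxy
    rcases hc x with rfl|rfl|rfl|rfl|rfl|rfl <;> rcases hc y with rfl|rfl|rfl|rfl|rfl|rfl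
    · rfl
    · exact absurd hxy D0_1
    · exact absurd hxy E0_2
    · exact absurd hxy E0_3
    · exact absurd hxy E0_4
    · exact absurd hxy D0_5
    · exact absurd hxy D1_0
    · rfl
    · exact absurd hxy D1_2
    · exact absurd hxy E1_3
    · exact absurd hxy E1_4
    · exact absurd hxy E1_5
    · exact absurd hxy E2_0
    · exact absurd hxy D2_1
    · rfl
    · exact absurd hxy D2_3
    · exact absurd hxy E2_4
    · exact absurd hxy E2_5
    · exact absurd hxy E3_0
    · exact absurd hxy E3_1
    · exact absurd hxy D3_2
    · rfl
    · exact absurd hxy D3_4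
    · exact absurd hxy E3_5
    · exact absurd hxy E4_0
    · exact absurd hxy E4_1
    · exact absurd hxy E4_2
    · exact absurd hxy D4_3
    · rfl
    · exact absurd hxy D4_5
    · exact absurd hxy D5_0
    · exact absurd hxy E5_1
    · exact absurd hxy E5_2
    · exact absurd hxy E5_3
    · exact absurd hxy D5_4
    · rfl
  · intro i j
    rcases hc i with rfl|rfl|rfl|rfl|rfl|rfl <;> rcases hc j with rfl|rfl|rfl|rfl|rfl|rfl
    · exact iff_of_false (G.loopless.irrefl _) (by decide)
    · exact iff_of_true A0_1 (by decide)
    · exact iff_of_false N0_2 (by decide)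
    · exact iff_of_false N0_3 (by decide)
    · exact iff_of_false N0_4 (by decide)
    · exact iff_of_true A0_5 (by decide)
    · exact iff_of_true A1_0 (by decide)
    · exact iff_of_false (G.loopless.irrefl _) (by decide)
    · exact iff_of_true A1_2 (by decide)
    · exact iff_of_false N1_3 (by decide)
    · exact iff_of_false N1_4 (by decide)
    · exact iff_of_false N1_5 (by decide)
    · exact iff_of_false N2_0 (by decide)
    · exact iff_of_true A2_1 (by decide)
    · exact iff_of_false (G.loopless.irrefl _) (by decide)
    · exact iff_of_true A2_3 (by decide)
    · exact iff_of_false N2_4 (by decide)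
    · exact iff_of_false N2_5 (by decide)
    · exact iff_of_false N3_0 (by decide)
    · exact iff_of_false N3_1 (by decide)
    · exact iff_of_true A3_2 (by decide)
    · exact iff_of_false (G.loopless.irrefl _) (by decide)
    · exact iff_of_true A3_4 (by decide)
    · exact iff_of_false N3_5 (by decide)
    · exact iff_of_false N4_0 (by decide)
    · exact iff_of_false N4_1 (by decide)
    · exact iff_of_false N4_2 (by decide)
    · exact iff_of_true A4_3 (by decide)
    · exact iff_of_false (G.loopless.irrefl _) (by decide)
    · exact iff_of_true A4_5 (by decide)
    · exact iff_of_true A5_0 (by decide)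
    · exact iff_of_false N5_1 (by decide)
    · exact iff_of_false N5_2 (by decide)
    · exact iff_of_false N5_3 (by decide)
    · exact iff_of_true A5_4 (by decide)
    · exact iff_of_false (G.loopless.irrefl _) (by decide)

lemma noC7 (hch : Chordal G) (p0 p1 p2 p3 p4 p5 p6 : V)
    (a01 : G.Adj p0 p1) (a12 : G.Adj p1 p2) (a23 : G.Adj p2 p3) (a34 : G.Adj p3 p4) (a45 : G.Adj p4 p5) (a56 : G.Adj p5 p6) (a60 : G.Adj p6 p0) (n02 : ¬ G.Adj p0 p2) (n03 : ¬ G.Adj p0 p3) (n04 : ¬ G.Adj p0 p4) (n05 : ¬ G.Adj p0 p5) (n13 : ¬ G.Adj p1 p3) (n14 : ¬ G.Adj p1 p4) (n15 : ¬ G.Adj p1 p5) (n16 : ¬ G.Adj p1 p6) (n24 : ¬ G.Adj p2 p4) (n25 : ¬ G.Adj p2 p5) (n26 : ¬ G.Adj p2 p6) (n35 : ¬ G.Adj p3 p5) (n36 : ¬ G.Adj p3 p6) (n46 : ¬ G.Adj p4 p6) (d02 : p0 ≠ p2) (d03 : p0 ≠ p3) (d04 : p0 ≠ p4) (d05 :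 p0 ≠ p5) (d13 : p1 ≠ p3) (d14 : p1 ≠ p4) (d15 : p1 ≠ p5) (d16 : p1 ≠ p6) (d24 : p2 ≠ p4) (d25 : p2 ≠ p5) (d26 : p2 ≠ p6) (d35 : p3 ≠ p5) (d36 : p3 ≠ p6) (d46 : p4 ≠ p6) : False := by
  have A0_1 : G.Adj p0 p1 := a01
  have A1_0 : G.Adj p1 p0 := a01.symm
  have D0_1 : p0 ≠ p1 := G.ne_of_adj a01
  have D1_0 : p1 ≠ p0 := (G.ne_of_adj a01).symm
  have A1_2 : G.Adj p1 p2 := a12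
  have A2_1 : G.Adj p2 p1 := a12.symm
  have D1_2 : p1 ≠ p2 := G.ne_of_adj a12
  have D2_1 : p2 ≠ p1 := (G.ne_of_adj a12).symm
  have A2_3 : G.Adj p2 p3 := a23
  have A3_2 : G.Adj p3 p2 := a23.symm
  have D2_3 : p2 ≠ p3 := G.ne_of_adj a23
  have D3_2 : p3 ≠ p2 := (G.ne_of_adj a23).symm
  have A3_4 : G.Adj p3 p4 := a34
  have A4_3 : G.Adj p4 p3 := a34.symm
  have D3_4 : p3 ≠ p4 := G.ne_of_adj a34
  have D4_3 : p4 ≠ p3 := (G.ne_of_adj a34).symm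
  have A4_5 : G.Adj p4 p5 := a45
  have A5_4 : G.Adj p5 p4 := a45.symm
  have D4_5 : p4 ≠ p5 := G.ne_of_adj a45
  have D5_4 : p5 ≠ p4 := (G.ne_of_adj a45).symm
  have A5_6 : G.Adj p5 p6 := a56
  have A6_5 : G.Adj p6 p5 := a56.symm
  have D5_6 : p5 ≠ p6 := G.ne_of_adj a56
  have D6_5 : p6 ≠ p5 := (G.ne_of_adj a56).symm
  have A6_0 : G.Adj p6 p0 := a60
  have A0_6 : G.Adj p0 p6 := a60.symm
  have D6_0 : p6 ≠ p0 := G.ne_of_adj a60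
  have D0_6 : p0 ≠ p6 := (G.ne_of_adj a60).symm
  have N0_2 : ¬ G.Adj p0 p2 := n02
  have N2_0 : ¬ G.Adj p2 p0 := fun h => n02 h.symm
  have E0_2 : p0 ≠ p2 := d02
  have E2_0 : p2 ≠ p0 := d02.symm
  have N0_3 : ¬ G.Adj p0 p3 := n03
  have N3_0 : ¬ G.Adj p3 p0 := fun h => n03 h.symm
  have E0_3 : p0 ≠ p3 := d03
  have E3_0 : p3 ≠ p0 := d03.symm
  have N0_4 : ¬ G.Adj p0 p4 := n04
  have N4_0 : ¬ G.Adj p4 p0 := fun h => n04 h.symm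
  have E0_4 : p0 ≠ p4 := d04
  have E4_0 : p4 ≠ p0 := d04.symm
  have N0_5 : ¬ G.Adj p0 p5 := n05
  have N5_0 : ¬ G.Adj p5 p0 := fun h => n05 h.symm
  have E0_5 : p0 ≠ p5 := d05
  have E5_0 : p5 ≠ p0 := d05.symm
  have N1_3 : ¬ G.Adj p1 p3 := n13
  have N3_1 : ¬ G.Adj p3 p1 := fun h => n13 h.symm
  have E1_3 : p1 ≠ p3 := d13
  have E3_1 : p3 ≠ p1 := d13.symm
  have N1_4 : ¬ G.Adj p1 p4 := n14
  have N4_1 : ¬ G.Adj p4 p1 := fun h => n14 h.symm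
  have E1_4 : p1 ≠ p4 := d14
  have E4_1 : p4 ≠ p1 := d14.symm
  have N1_5 : ¬ G.Adj p1 p5 := n15
  have N5_1 : ¬ G.Adj p5 p1 := fun h => n15 h.symm
  have E1_5 : p1 ≠ p5 := d15
  have E5_1 : p5 ≠ p1 := d15.symm
  have N1_6 : ¬ G.Adj p1 p6 := n16
  have N6_1 : ¬ G.Adj p6 p1 := fun h => n16 h.symm
  have E1_6 : p1 ≠ p6 := d16
  have E6_1 : p6 ≠ p1 := d16.symm
  have N2_4 : ¬ G.Adj p2 p4 := n24
  have N4_2 : ¬ G.Adj p4 p2 := fun h => n24 h.symm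
  have E2_4 : p2 ≠ p4 := d24
  have E4_2 : p4 ≠ p2 := d24.symm
  have N2_5 : ¬ G.Adj p2 p5 := n25
  have N5_2 : ¬ G.Adj p5 p2 := fun h => n25 h.symm
  have E2_5 : p2 ≠ p5 := d25
  have E5_2 : p5 ≠ p2 := d25.symm
  have N2_6 : ¬ G.Adj p2 p6 := n26
  have N6_2 : ¬ G.Adj p6 p2 := fun h => n26 h.symm
  have E2_6 : p2 ≠ p6 := d26
  have E6_2 : p6 ≠ p2 := d26.symm
  have N3_5 : ¬ G.Adj p3 p5 := n35
  have N5_3 : ¬ G.Adj p5 p3 := fun h => n35 h.symm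
  have E3_5 : p3 ≠ p5 := d35
  have E5_3 : p5 ≠ p3 := d35.symm
  have N3_6 : ¬ G.Adj p3 p6 := n36
  have N6_3 : ¬ G.Adj p6 p3 := fun h => n36 h.symm
  have E3_6 : p3 ≠ p6 := d36
  have E6_3 : p6 ≠ p3 := d36.symm
  have N4_6 : ¬ G.Adj p4 p6 := n46
  have N6_4 : ¬ G.Adj p6 p4 := fun h => n46 h.symm
  have E4_6 : p4 ≠ p6 := d46
  have E6_4 : p6 ≠ p4 := d46.symm
  have hc : ∀ i : ZMod 7, i = 0 ∨ i = 1 ∨ i = 2 ∨ i = 3 ∨ i = 4 ∨ i = 5 ∨ i = 6 := by decide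
  refine hch 7 (by norm_num) ⟨![p0, p1, p2, p3, p4, p5, p6], ?_, ?_⟩
  · intro x y hxy
    rcases hc x with rfl|rfl|rfl|rfl|rfl|rfl|rfl <;> rcases hc y with rfl|rfl|rfl|rfl|rfl|rfl|rfl
    · rfl
    · exact absurd hxy D0_1
    · exact absurd hxy E0_2
    · exact absurd hxy E0_3
    · exact absurd hxy E0_4
    · exact absurd hxy E0_5
    · exact absurd hxy D0_6
    · exact absurd hxy D1_0
    · rfl
    · exact absurd hxy D1_2
    · exact absurd hxy E1_3
    · exact absurd hxy E1_4
    · exact absurd hxy E1_5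
    · exact absurd hxy E1_6
    · exact absurd hxy E2_0
    · exact absurd hxy D2_1
    · rfl
    · exact absurd hxy D2_3
    · exact absurd hxy E2_4
    · exact absurd hxy E2_5
    · exact absurd hxy E2_6
    · exact absurd hxy E3_0
    · exact absurd hxy E3_1
    · exact absurd hxy D3_2
    · rfl
    · exact absurd hxy D3_4
    · exact absurd hxy E3_5
    · exact absurd hxy E3_6
    · exact absurd hxy E4_0
    · exact absurd hxy E4_1
    · exact absurd hxy E4_2
    · exact absurd hxy D4_3
    · rfl
    · exact absurd hxy D4_5
    · exact absurd hxy E4_6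
    · exact absurd hxy E5_0
    · exact absurd hxy E5_1
    · exact absurd hxy E5_2
    · exact absurd hxy E5_3
    · exact absurd hxy D5_4
    · rfl
    · exact absurd hxy D5_6
    · exact absurd hxy D6_0
    · exact absurd hxy E6_1
    · exact absurd hxy E6_2
    · exact absurd hxy E6_3
    · exact absurd hxy E6_4
    · exact absurd hxy D6_5
    · rfl
  · intro i j
    rcases hc i with rfl|rfl|rfl|rfl|rfl|rfl|rfl <;> rcases hc j with rfl|rfl|rfl|rfl|rfl|rfl|rfl
    · exact iff_of_false (G.loopless.irrefl _) (by decide)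
    · exact iff_of_true A0_1 (by decide)
    · exact iff_of_false N0_2 (by decide)
    · exact iff_of_false N0_3 (by decide)
    · exact iff_of_false N0_4 (by decide)
    · exact iff_of_false N0_5 (by decide)
    · exact iff_of_true A0_6 (by decide)
    · exact iff_of_true A1_0 (by decide)
    · exact iff_of_false (G.loopless.irrefl _) (by decide)
    · exact iff_of_true A1_2 (by decide)
    · exact iff_of_false N1_3 (by decide)
    · exact iff_of_false N1_4 (by decide)
    · exact iff_of_false N1_5 (by decide)
    · exact iff_of_false N1_6 (by decide)
    · exact iff_of_false N2_0 (by decide)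
    · exact iff_of_true A2_1 (by decide)
    · exact iff_of_false (G.loopless.irrefl _) (by decide)
    · exact iff_of_true A2_3 (by decide)
    · exact iff_of_false N2_4 (by decide)
    · exact iff_of_false N2_5 (by decide)
    · exact iff_of_false N2_6 (by decide)
    · exact iff_of_false N3_0 (by decide)
    · exact iff_of_false N3_1 (by decide)
    · exact iff_of_true A3_2 (by decide)
    · exact iff_of_false (G.loopless.irrefl _) (by decide)
    · exact iff_of_true A3_4 (by decide)
    · exact iff_of_false N3_5 (by decide)
    · exact iff_of_false N3_6 (by decide)
    · exact iff_of_false N4_0 (by decide)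
    · exact iff_of_false N4_1 (by decide)
    · exact iff_of_false N4_2 (by decide)
    · exact iff_of_true A4_3 (by decide)
    · exact iff_of_false (G.loopless.irrefl _) (by decide)
    · exact iff_of_true A4_5 (by decide)
    · exact iff_of_false N4_6 (by decide)
    · exact iff_of_false N5_0 (by decide)
    · exact iff_of_false N5_1 (by decide)
    · exact iff_of_false N5_2 (by decide)
    · exact iff_of_false N5_3 (by decide)
    · exact iff_of_true A5_4 (by decide)
    · exact iff_of_false (G.loopless.irrefl _) (by decide)
    · exact iff_of_true A5_6 (by decide)
    · exact iff_of_true A6_0 (by decide)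
    · exact iff_of_false N6_1 (by decide)
    · exact iff_of_false N6_2 (by decide)
    · exact iff_of_false N6_3 (by decide)
    · exact iff_of_false N6_4 (by decide)
    · exact iff_of_true A6_5 (by decide)
    · exact iff_of_false (G.loopless.irrefl _) (by decide)

lemma noP7 (hP7 : PkFree G 7) (p0 p1 p2 p3 p4 p5 p6 : V)
    (a01 : G.Adj p0 p1) (a12 : G.Adj p1 p2) (a23 : G.Adj p2 p3) (a34 : G.Adj p3 p4) (a45 : G.Adj p4 p5) (a56 : G.Adj p5 p6) (n02 : ¬ G.Adj p0 p2) (n03 : ¬ G.Adj p0 p3) (n04 : ¬ G.Adj p0 p4) (n05 : ¬ G.Adj p0 p5) (n06 : ¬ G.Adj p0 p6) (n13 : ¬ G.Adj p1 p3) (n14 : ¬ G.Adj p1 p4) (n15 : ¬ G.Adj p1 p5) (n16 : ¬ G.Adj p1 p6) (n24 : ¬ G.Adj p2 p4) (n25 : ¬ G.Adj p2 p5) (n26 : ¬ G.Adj p2 p6) (n35 : ¬ G.Adj p3 p5) (n36 : ¬ G.Adj p3 p6) (n46 : ¬ G.Adj p4 p6) (d02 : p0 ≠ p2) (d03 : p0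 ≠ p3) (d04 : p0 ≠ p4) (d05 : p0 ≠ p5) (d06 : p0 ≠ p6) (d13 : p1 ≠ p3) (d14 : p1 ≠ p4) (d15 : p1 ≠ p5) (d16 : p1 ≠ p6) (d24 : p2 ≠ p4) (d25 : p2 ≠ p5) (d26 : p2 ≠ p6) (d35 : p3 ≠ p5) (d36 : p3 ≠ p6) (d46 : p4 ≠ p6) : False := by
  have A0_1 : G.Adj p0 p1 := a01
  have A1_0 : G.Adj p1 p0 := a01.symm
  have D0_1 : p0 ≠ p1 := G.ne_of_adj a01
  have D1_0 : p1 ≠ p0 := (G.ne_of_adj a01).symm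
  have A1_2 : G.Adj p1 p2 := a12
  have A2_1 : G.Adj p2 p1 := a12.symm
  have D1_2 : p1 ≠ p2 := G.ne_of_adj a12
  have D2_1 : p2 ≠ p1 := (G.ne_of_adj a12).symm
  have A2_3 : G.Adj p2 p3 := a23
  have A3_2 : G.Adj p3 p2 := a23.symm
  have D2_3 : p2 ≠ p3 := G.ne_of_adj a23
  have D3_2 : p3 ≠ p2 := (G.ne_of_adj a23).symm
  have A3_4 : G.Adj p3 p4 := a34
  have A4_3 : G.Adj p4 p3 := a34.symm
  have D3_4 : p3 ≠ p4 := G.ne_of_adj a34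
  have D4_3 : p4 ≠ p3 := (G.ne_of_adj a34).symm
  have A4_5 : G.Adj p4 p5 := a45
  have A5_4 : G.Adj p5 p4 := a45.symm
  have D4_5 : p4 ≠ p5 := G.ne_of_adj a45
  have D5_4 : p5 ≠ p4 := (G.ne_of_adj a45).symm
  have A5_6 : G.Adj p5 p6 := a56
  have A6_5 : G.Adj p6 p5 := a56.symm
  have D5_6 : p5 ≠ p6 := G.ne_of_adj a56
  have D6_5 : p6 ≠ p5 := (G.ne_of_adj a56).symm
  have N0_2 : ¬ G.Adj p0 p2 := n02
  have N2_0 : ¬ G.Adj p2 p0 := fun h => n02 h.symm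
  have E0_2 : p0 ≠ p2 := d02
  have E2_0 : p2 ≠ p0 := d02.symm
  have N0_3 : ¬ G.Adj p0 p3 := n03
  have N3_0 : ¬ G.Adj p3 p0 := fun h => n03 h.symm
  have E0_3 : p0 ≠ p3 := d03
  have E3_0 : p3 ≠ p0 := d03.symm
  have N0_4 : ¬ G.Adj p0 p4 := n04
  have N4_0 : ¬ G.Adj p4 p0 := fun h => n04 h.symm
  have E0_4 : p0 ≠ p4 := d04
  have E4_0 : p4 ≠ p0 := d04.symm
  have N0_5 : ¬ G.Adj p0 p5 := n05
  have N5_0 : ¬ G.Adj p5 p0 := fun h => n05 h.symm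
  have E0_5 : p0 ≠ p5 := d05
  have E5_0 : p5 ≠ p0 := d05.symm
  have N0_6 : ¬ G.Adj p0 p6 := n06
  have N6_0 : ¬ G.Adj p6 p0 := fun h => n06 h.symm
  have E0_6 : p0 ≠ p6 := d06
  have E6_0 : p6 ≠ p0 := d06.symm
  have N1_3 : ¬ G.Adj p1 p3 := n13
  have N3_1 : ¬ G.Adj p3 p1 := fun h => n13 h.symm
  have E1_3 : p1 ≠ p3 := d13
  have E3_1 : p3 ≠ p1 := d13.symm
  have N1_4 : ¬ G.Adj p1 p4 := n14
  have N4_1 : ¬ G.Adj p4 p1 := fun h => n14 h.symm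
  have E1_4 : p1 ≠ p4 := d14
  have E4_1 : p4 ≠ p1 := d14.symm
  have N1_5 : ¬ G.Adj p1 p5 := n15
  have N5_1 : ¬ G.Adj p5 p1 := fun h => n15 h.symm
  have E1_5 : p1 ≠ p5 := d15
  have E5_1 : p5 ≠ p1 := d15.symm
  have N1_6 : ¬ G.Adj p1 p6 := n16
  have N6_1 : ¬ G.Adj p6 p1 := fun h => n16 h.symm
  have E1_6 : p1 ≠ p6 := d16
  have E6_1 : p6 ≠ p1 := d16.symm
  have N2_4 : ¬ G.Adj p2 p4 := n24
  have N4_2 : ¬ G.Adj p4 p2 := fun h => n24 h.symm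
  have E2_4 : p2 ≠ p4 := d24
  have E4_2 : p4 ≠ p2 := d24.symm
  have N2_5 : ¬ G.Adj p2 p5 := n25
  have N5_2 : ¬ G.Adj p5 p2 := fun h => n25 h.symm
  have E2_5 : p2 ≠ p5 := d25
  have E5_2 : p5 ≠ p2 := d25.symm
  have N2_6 : ¬ G.Adj p2 p6 := n26
  have N6_2 : ¬ G.Adj p6 p2 := fun h => n26 h.symm
  have E2_6 : p2 ≠ p6 := d26
  have E6_2 : p6 ≠ p2 := d26.symm
  have N3_5 : ¬ G.Adj p3 p5 := n35
  have N5_3 : ¬ G.Adj p5 p3 := fun h => n35 h.symm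
  have E3_5 : p3 ≠ p5 := d35
  have E5_3 : p5 ≠ p3 := d35.symm
  have N3_6 : ¬ G.Adj p3 p6 := n36
  have N6_3 : ¬ G.Adj p6 p3 := fun h => n36 h.symm
  have E3_6 : p3 ≠ p6 := d36
  have E6_3 : p6 ≠ p3 := d36.symm
  have N4_6 : ¬ G.Adj p4 p6 := n46
  have N6_4 : ¬ G.Adj p6 p4 := fun h => n46 h.symm
  have E4_6 : p4 ≠ p6 := d46
  have E6_4 : p6 ≠ p4 := d46.symm
  have hc : ∀ i : Fin 7, i = 0 ∨ i = 1 ∨ i = 2 ∨ i = 3 ∨ i = 4 ∨ i = 5 ∨ i = 6 := by decide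
  refine hP7 ⟨![p0, p1, p2, p3, p4, p5, p6], ?_, ?_⟩
  · intro x y hxy
    rcases hc x with rfl|rfl|rfl|rfl|rfl|rfl|rfl <;> rcases hc y with rfl|rfl|rfl|rfl|rfl|rfl|rfl
    · rfl
    · exact absurd hxy D0_1
    · exact absurd hxy E0_2
    · exact absurd hxy E0_3
    · exact absurd hxy E0_4
    · exact absurd hxy E0_5
    · exact absurd hxy E0_6
    · exact absurd hxy D1_0
    · rfl
    · exact absurd hxy D1_2
    · exact absurd hxy E1_3
    · exact absurd hxy E1_4
    · exact absurd hxy E1_5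
    · exact absurd hxy E1_6
    · exact absurd hxy E2_0
    · exact absurd hxy D2_1
    · rfl
    · exact absurd hxy D2_3
    · exact absurd hxy E2_4
    · exact absurd hxy E2_5
    · exact absurd hxy E2_6
    · exact absurd hxy E3_0
    · exact absurd hxy E3_1
    · exact absurd hxy D3_2
    · rfl
    · exact absurd hxy D3_4
    · exact absurd hxy E3_5
    · exact absurd hxy E3_6
    · exact absurd hxy E4_0
    · exact absurd hxy E4_1
    · exact absurd hxy E4_2
    · exact absurd hxy D4_3
    · rfl
    · exact absurd hxy D4_5
    · exact absurd hxy E4_6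
    · exact absurd hxy E5_0
    · exact absurd hxy E5_1
    · exact absurd hxy E5_2
    · exact absurd hxy E5_3
    · exact absurd hxy D5_4
    · rfl
    · exact absurd hxy D5_6
    · exact absurd hxy E6_0
    · exact absurd hxy E6_1
    · exact absurd hxy E6_2
    · exact absurd hxy E6_3
    · exact absurd hxy E6_4
    · exact absurd hxy D6_5
    · rfl
  · intro i j
    rcases hc i with rfl|rfl|rfl|rfl|rfl|rfl|rfl <;> rcases hc j with rfl|rfl|rfl|rfl|rfl|rfl|rfl
    · exact iff_of_false (G.loopless.irrefl _) (by decide)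
    · exact iff_of_true A0_1 (by decide)
    · exact iff_of_false N0_2 (by decide)
    · exact iff_of_false N0_3 (by decide)
    · exact iff_of_false N0_4 (by decide)
    · exact iff_of_false N0_5 (by decide)
    · exact iff_of_false N0_6 (by decide)
    · exact iff_of_true A1_0 (by decide)
    · exact iff_of_false (G.loopless.irrefl _) (by decide)
    · exact iff_of_true A1_2 (by decide)
    · exact iff_of_false N1_3 (by decide)
    · exact iff_of_false N1_4 (by decide)
    · exact iff_of_false N1_5 (by decide)
    · exact iff_of_false N1_6 (by decide)
    · exact iff_of_false N2_0 (by decide)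
    · exact iff_of_true A2_1 (by decide)
    · exact iff_of_false (G.loopless.irrefl _) (by decide)
    · exact iff_of_true A2_3 (by decide)
    · exact iff_of_false N2_4 (by decide)
    · exact iff_of_false N2_5 (by decide)
    · exact iff_of_false N2_6 (by decide)
    · exact iff_of_false N3_0 (by decide)
    · exact iff_of_false N3_1 (by decide)
    · exact iff_of_true A3_2 (by decide)
    · exact iff_of_false (G.loopless.irrefl _) (by decide)
    · exact iff_of_true A3_4 (by decide)
    · exact iff_of_false N3_5 (by decide)
    · exact iff_of_false N3_6 (by decide)
    · exact iff_of_false N4_0 (by decide)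
    · exact iff_of_false N4_1 (by decide)
    · exact iff_of_false N4_2 (by decide)
    · exact iff_of_true A4_3 (by decide)
    · exact iff_of_false (G.loopless.irrefl _) (by decide)
    · exact iff_of_true A4_5 (by decide)
    · exact iff_of_false N4_6 (by decide)
    · exact iff_of_false N5_0 (by decide)
    · exact iff_of_false N5_1 (by decide)
    · exact iff_of_false N5_2 (by decide)
    · exact iff_of_false N5_3 (by decide)
    · exact iff_of_true A5_4 (by decide)
    · exact iff_of_false (G.loopless.irrefl _) (by decide)
    · exact iff_of_true A5_6 (by decide)
    · exact iff_of_false N6_0 (by decide)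
    · exact iff_of_false N6_1 (by decide)
    · exact iff_of_false N6_2 (by decide)
    · exact iff_of_false N6_3 (by decide)
    · exact iff_of_false N6_4 (by decide)
    · exact iff_of_true A6_5 (by decide)
    · exact iff_of_false (G.loopless.irrefl _) (by decide)

variable {G : SimpleGraph V}

lemma mem_cnbr_iff {u v : V} : u ∈ cnbr G v ↔ u = v ∨ G.Adj v u := by
  simp [cnbr]
lemma cnbr_self (v : V) : v ∈ cnbr G v := by simp [cnbr]
lemma adj_cnbr {u v : V} (h : G.Adj v u) : u ∈ cnbr G v := mem_cnbr_iff.mpr (Or.inr h)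
lemma mem_cnbr_comm {u v : V} : u ∈ cnbr G v ↔ v ∈ cnbr G u := by
  simp only [mem_cnbr_iff]
  constructor
  · rintro (rfl | h); exacts [Or.inl rfl, Or.inr h.symm]
  · rintro (rfl | h); exacts [Or.inl rfl, Or.inr h.symm]
lemma mem_cnbrSet {S : Set V} {z : V} : z ∈ cnbrSet G S ↔ ∃ s ∈ S, z ∈ cnbr G s := by
  simp [cnbrSet]

lemma exists_out {IR : Set V} (hIR : IsIrredundantSet G IR) {Y : V} (hY : Y ∈ IR) (X q : V)
    (hq : q ∈ cnbr G Y) (hq' : q ∉ cnbr G X) : ∃ z ∈ cnbr G X, z ∉ cnbr G Y := by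
  by_contra hcon
  push_neg at hcon
  exact hIR.2.1 Y hY X ⟨hcon, fun hrev => hq' (hrev hq)⟩


lemma ir_clique (hch : Chordal G) (hP7 : PkFree G 7) {IR : Set V} (hIR : IsIrredundantSet G IR)
    {u v w : V} (hu : u ∈ IR) (hv : v ∈ IR) (hw : w ∈ IR)
    (hvu : G.Adj v u) (hvw : G.Adj v w) (huw : u ≠ w) : G.Adj u w := by
  by_contra hnadj
  have hwnu : w ∉ cnbr G u := by
    rw [mem_cnbr_iff]; push_neg; exact ⟨huw.symm, hnadj⟩
  have hunw : u ∉ cnbr G w := by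
    rw [mem_cnbr_iff]; push_neg; exact ⟨huw, fun h => hnadj h.symm⟩
  obtain ⟨a, haU, haV⟩ := exists_out hIR hv u w (adj_cnbr hvw) hwnu
  have hau : G.Adj u a := by
    rcases mem_cnbr_iff.mp haU with rfl | h
    · exact absurd (adj_cnbr hvu) haV
    · exact h
  have nVA : ¬ G.Adj v a := fun h => haV (adj_cnbr h)
  have dAV : a ≠ v := fun h => haV (by rw [h]; exact cnbr_self v)
  have dAW : a ≠ w := fun h => haV (by rw [h]; exact adj_cnbr hvw)
  obtain ⟨c, hcW, hcV⟩ := exists_out hIR hv w u (adj_cnbr hvu) hunw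
  have hwc : G.Adj w c := by
    rcases mem_cnbr_iff.mp hcW with rfl | h
    · exact absurd (adj_cnbr hvw) hcV
    · exact h
  have nVC : ¬ G.Adj v c := fun h => hcV (adj_cnbr h)
  have dCV : c ≠ v := fun h => hcV (by rw [h]; exact cnbr_self v)
  have dCU : c ≠ u := fun h => hcV (by rw [h]; exact adj_cnbr hvu)
  have nAW : ¬ G.Adj a w := fun h =>
    noC4 hch a u v w hau.symm hvu.symm hvw h.symm
      (fun hh => nVA hh.symm) hnadj dAV huw
  have nCU : ¬ G.Adj c u := fun h =>
    noC4 hch u v w c hvu.symm hvw hwc h hnadj nVC huw dCV.symm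
  have dAC : a ≠ c := fun h => nAW (by rw [h]; exact hwc.symm)
  have nAC : ¬ G.Adj a c := fun h =>
    noC5 hch a u v w c hau.symm hvu.symm hvw hwc h.symm
      (fun hh => nVA hh.symm) nAW hnadj (fun hh => nCU hh.symm) nVC
      dAV dAW huw dCU.symm dCV.symm
  -- a2
  have hvna : v ∉ cnbr G a := by
    rw [mem_cnbr_iff]; push_neg; exact ⟨fun h => dAV h.symm, fun h => nVA h.symm⟩
  obtain ⟨a2, ha2A, ha2U⟩ := exists_out hIR hu a v (adj_cnbr hvu.symm) hvna
  have haa2 : G.Adj a a2 := by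
    rcases mem_cnbr_iff.mp ha2A with rfl | h
    · exact absurd haU ha2U
    · exact h
  have nUA2 : ¬ G.Adj u a2 := fun h => ha2U (adj_cnbr h)
  have dA2U : a2 ≠ u := fun h => ha2U (by rw [h]; exact cnbr_self u)
  have dA2V : a2 ≠ v := fun h => ha2U (by rw [h]; exact adj_cnbr hvu.symm)
  have dA2W : a2 ≠ w := fun h => nAW (by rw [← h]; exact haa2)
  have dA2C : a2 ≠ c := fun h => nAC (by rw [← h]; exact haa2)
  have nA2V : ¬ G.Adj a2 v := fun h =>
    noC4 hch a2 a u v haa2.symm hau.symm hvu.symm h.symm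
      (fun hh => nUA2 hh.symm) (fun hh => nVA hh.symm) dA2U dAV
  have nA2W : ¬ G.Adj a2 w := fun h =>
    noC5 hch a2 a u v w haa2.symm hau.symm hvu.symm hvw h.symm
      (fun hh => nUA2 hh.symm) nA2V (fun hh => nVA hh.symm) nAW hnadj
      dA2U dA2V dAV dAW huw
  have nA2C : ¬ G.Adj a2 c := fun h =>
    noC6 hch a2 a u v w c haa2.symm hau.symm hvu.symm hvw hwc h.symm
      (fun hh => nUA2 hh.symm) nA2V nA2W (fun hh => nVA hh.symm) nAW nAC
      hnadj (fun hh => nCU hh.symm) nVC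
      dA2U dA2V dA2W dAV dAW dAC huw dCU.symm dCV.symm
  -- c2
  have hvnc : v ∉ cnbr G c := by
    rw [mem_cnbr_iff]; push_neg; exact ⟨fun h => dCV h.symm, fun h => nVC h.symm⟩
  obtain ⟨c2, hc2C, hc2W⟩ := exists_out hIR hw c v (adj_cnbr hvw.symm) hvnc
  have hcc2 : G.Adj c c2 := by
    rcases mem_cnbr_iff.mp hc2C with rfl | h
    · exact absurd hcW hc2W
    · exact h
  have nWC2 : ¬ G.Adj w c2 := fun h => hc2W (adj_cnbr h)
  have dC2W : c2 ≠ w := fun h => hc2W (by rw [h]; exact cnbr_self w)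
  have dC2V : c2 ≠ v := fun h => hc2W (by rw [h]; exact adj_cnbr hvw.symm)
  have dC2U : c2 ≠ u := fun h => nCU (by rw [← h]; exact hcc2)
  have dC2A : c2 ≠ a := fun h => nAC ((by rw [← h]; exact hcc2 : G.Adj c a)).symm
  have nC2V : ¬ G.Adj c2 v := fun h =>
    noC4 hch c2 c w v hcc2.symm hwc.symm hvw.symm h.symm
      (fun hh => nWC2 hh.symm) (fun hh => nVC hh.symm) dC2W dCV
  have nC2U : ¬ G.Adj c2 u := fun h =>
    noC5 hch c2 c w v u hcc2.symm hwc.symm hvw.symm hvu h.symm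
      (fun hh => nWC2 hh.symm) nC2V (fun hh => nVC hh.symm) nCU
      (fun hh => hnadj hh.symm)
      dC2W dC2V dCV dCU huw.symm
  have nC2A : ¬ G.Adj c2 a := fun h =>
    noC6 hch c2 c w v u a hcc2.symm hwc.symm hvw.symm hvu hau h.symm
      (fun hh => nWC2 hh.symm) nC2V nC2U (fun hh => nVC hh.symm) nCU
      (fun hh => nAC hh.symm) (fun hh => hnadj hh.symm) (fun hh => nAW hh.symm) nVA
      dC2W dC2V dC2U dCV dCU dAC.symm huw.symm dAW.symm dAV.symm
  have dA2C2 : a2 ≠ c2 := fun h => nA2C (by rw [h]; exact hcc2.symm)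
  by_cases hlast : G.Adj a2 c2
  · exact noC7 hch a2 a u v w c c2 haa2.symm hau.symm hvu.symm hvw hwc hcc2 hlast.symm
      (fun hh => nUA2 hh.symm) nA2V nA2W nA2C (fun hh => nVA hh.symm) nAW nAC
      (fun hh => nC2A hh.symm) hnadj (fun hh => nCU hh.symm) (fun hh => nC2U hh.symm)
      nVC (fun hh => nC2V hh.symm) (fun hh => nWC2 hh)
      dA2U dA2V dA2W dA2C dAV dAW dAC dC2A.symm huw dCU.symm dC2U.symm dCV.symm dC2V.symm dC2W.symm
  · exact noP7 hP7 a2 a u v w c c2 haa2.symm hau.symm hvu.symm hvw hwc hcc2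
      (fun hh => nUA2 hh.symm) nA2V nA2W nA2C hlast (fun hh => nVA hh.symm) nAW nAC
      (fun hh => nC2A hh.symm) hnadj (fun hh => nCU hh.symm) (fun hh => nC2U hh.symm)
      nVC (fun hh => nC2V hh.symm) (fun hh => nWC2 hh)
      dA2U dA2V dA2W dA2C dA2C2 dAV dAW dAC dC2A.symm huw dCU.symm dC2U.symm dCV.symm dC2V.symm dC2W.symm

lemma cnbrSet_mono {S T : Set V} (h : S ⊆ T) : cnbrSet G S ⊆ cnbrSet G T := by
  intro z hz
  obtain ⟨s, hs, hzs⟩ := mem_cnbrSet.mp hz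
  exact mem_cnbrSet.mpr ⟨s, h hs, hzs⟩


/-- In a `P₇`-free chordal graph, `A ∈ D_RN(G)` iff every `x ∈ A` has an
irredundant private neighbor in some irredundant component entirely contained in `N(A)`. -/
theorem stmt_11 [Fintype V] (G : SimpleGraph V) (hch : Chordal G) (hP7 : PkFree G 7)
    (IR : Set V) (hIR : IsIrredundantSet G IR)
    (A : Set V) (hA : A ⊆ IRᶜ) :
    memDRN G IR A ↔
      ∀ x ∈ A, ∃ C : Set V, IsCompOf G IR C ∧ C ⊆ onbrSet G A ∧
        (privIR G IR A x ∩ C).Nonempty := by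
  classical
  obtain ⟨hex, hmin2, hdist⟩ := hIR
  constructor
  · rintro ⟨D, ⟨hdom, hminimal⟩, rfl⟩ x hx
    have hxD : x ∈ D := hx.1
    have hxIR : x ∉ IR := hx.2
    have hne : D \ {x} ≠ D := fun heq => ((heq.symm ▸ hxD : x ∈ D \ {x}).2 rfl)
    have hssub : D \ {x} ⊂ D := Set.ssubset_iff_subset_ne.mpr ⟨Set.diff_subset, hne⟩
    have hnd := hminimal _ hssub
    rw [Dominates] at hnd
    obtain ⟨u, -, hu⟩ := Set.not_subset.mp hnd
    have hud : ∀ s ∈ D, u ∈ cnbr G s → s = x := by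
      intro s hs hus
      by_contra hne'
      exact hu (mem_cnbrSet.mpr ⟨s, ⟨hs, hne'⟩, hus⟩)
    obtain ⟨y, hyIR, hysub⟩ := hex u
    have hyD : ∀ s ∈ D, s ∈ cnbr G y → s = x := fun s hs hsy =>
      hud s hs (mem_cnbr_comm.mp (hysub hsy))
    have hxy : x ∈ cnbr G y := by
      obtain ⟨s, hsD, hys⟩ := mem_cnbrSet.mp (hdom (Set.mem_univ y))
      have hsx := hyD s hsD (mem_cnbr_comm.mp hys)
      exact hsx ▸ mem_cnbr_comm.mp hys
    set C : Set V := {z | z ∈ IR ∧ (z = y ∨ G.Adj y z)} with hCdef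
    have hyC : y ∈ C := ⟨hyIR, Or.inl rfl⟩
    have hclosed : ∀ z ∈ C, ∀ y' ∈ IR, G.Adj z y' → y' ∈ C := by
      rintro z ⟨hzIR, hz⟩ y' hy' hadj
      rcases hz with rfl | hyz
      · exact ⟨hy', Or.inr hadj⟩
      · by_cases hyy : y' = y
        · exact hyy ▸ hyC
        · exact ⟨hy', Or.inr (ir_clique hch hP7 ⟨hex, hmin2, hdist⟩ hyIR hzIR hy'
            hyz.symm hadj (fun h => hyy h.symm))⟩
    have hCy : ∀ z ∈ C, z ∈ cnbr G y := by
      rintro z ⟨hzIR, hz⟩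
      rcases hz with rfl | hyz
      · exact cnbr_self z
      · exact adj_cnbr hyz
    have hConbr : C ⊆ onbrSet G (D ∩ IRᶜ) := by
      rintro z hzC
      have hzIR := hzC.1
      refine ⟨?_, fun hzA => hzA.2 hzIR⟩
      obtain ⟨s, hsD, hzs⟩ := mem_cnbrSet.mp (hdom (Set.mem_univ z))
      by_cases hsIR : s ∈ IR
      · exfalso
        have hsC : s ∈ C := by
          rcases mem_cnbr_iff.mp (mem_cnbr_comm.mp hzs) with rfl | hadj
          · exact hzC
          · exact hclosed z hzC s hsIR hadj
        have hsx := hyD s hsD (hCy s hsC)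
        exact hxIR (hsx ▸ hsIR)
      · exact mem_cnbrSet.mpr ⟨s, ⟨hsD, hsIR⟩, hzs⟩
    refine ⟨C, ⟨fun z hz => hz.1, ⟨y, hyC⟩, ?_, hclosed⟩, hConbr, ⟨y, ⟨?_, hyIR⟩, hyC⟩⟩
    · rw [SimpleGraph.connected_iff]
      refine ⟨?_, ⟨⟨y, hyC⟩⟩⟩
      have hreach : ∀ z : C, (G.induce C).Reachable z ⟨y, hyC⟩ := by
        rintro ⟨z, hzIR, hz⟩
        rcases hz with rfl | hadj
        · exact SimpleGraph.Reachable.refl _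
        · exact SimpleGraph.Adj.reachable (by simpa using hadj.symm)
      exact fun z1 z2 => (hreach z1).trans (hreach z2).symm
    · show cnbr G y ∩ (D ∩ IRᶜ) = {x}
      apply Set.eq_singleton_iff_unique_mem.mpr
      exact ⟨⟨hxy, hxD, hxIR⟩, fun s hs => hyD s hs.2.1 hs.1⟩
  · intro h
    have h' : ∀ a, a ∈ A → ∃ y, (cnbr G y ∩ A = {a}) ∧ y ∈ IR ∧ ∃ Ca,
        (∀ z ∈ Ca, z ∈ IR) ∧ (∀ p ∈ Ca, ∀ q ∈ IR, G.Adj p q → q ∈ Ca) ∧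
        Ca ⊆ onbrSet G A ∧ y ∈ Ca := by
      intro a ha
      obtain ⟨Ca, hComp, hsub, yy, hy⟩ := h a ha
      exact ⟨yy, hy.1.1, hy.1.2, Ca, fun z hz => hComp.1 hz, hComp.2.2.2, hsub, hy.2⟩
    choose! y hy1 hy2 Ca hCaIR hCaCl hCaN hyCa using h'
    choose g hgIR hgsub using hex
    set W : Set V := {w | w ∉ cnbrSet G A} with hW
    set X0 : Set V := g '' W with hX0
    have hdom0 : Dominates G (A ∪ X0) Set.univ := by
      intro v _
      by_cases hv : v ∈ cnbrSet G A
      · obtain ⟨s, hs, hvs⟩ := mem_cnbrSet.mp hv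
        exact mem_cnbrSet.mpr ⟨s, Or.inl hs, hvs⟩
      · exact mem_cnbrSet.mpr ⟨g v, Or.inr ⟨v, hv, rfl⟩,
          mem_cnbr_comm.mp (hgsub v (cnbr_self (g v)))⟩
    have hkey : ∀ w ∈ W, ∀ a ∈ A, g w ∉ cnbr G (y a) := by
      intro w hw a ha hmem
      have hgC : g w ∈ Ca a := by
        rcases mem_cnbr_iff.mp hmem with heq | hadj
        · exact heq ▸ hyCa a ha
        · exact hCaCl a ha (y a) (hyCa a ha) (g w) (hgIR w) hadj
      obtain ⟨hgN, -⟩ := hCaN a ha hgC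
      obtain ⟨a', ha', hga'⟩ := mem_cnbrSet.mp hgN
      exact hw (mem_cnbrSet.mpr ⟨a', ha',
        mem_cnbr_comm.mp (hgsub w (mem_cnbr_comm.mp hga'))⟩)
    obtain ⟨X, ⟨hXsub, hXdom⟩, hXmin⟩ :=
      Set.Finite.exists_minimalFor id {Y : Set V | Y ⊆ X0 ∧ Dominates G (A ∪ Y) Set.univ}
        (Set.toFinite _) ⟨X0, subset_rfl, hdom0⟩
    refine ⟨A ∪ X, ⟨hXdom, ?_⟩, ?_⟩
    · intro D' hss hdomD'
      obtain ⟨d, hdD, hdD'⟩ := Set.exists_of_ssubset hss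
      have hsubD : D' ⊆ (A ∪ X) \ {d} := fun z hz =>
        ⟨hss.1 hz, fun hzd => hdD' (hzd ▸ hz)⟩
      have hdom'' : Dominates G ((A ∪ X) \ {d}) Set.univ := fun v hv =>
        (cnbrSet_mono hsubD) (hdomD' hv)
      rcases hdD with hdA | hdX
      · have hyd : y d ∈ cnbrSet G ((A ∪ X) \ {d}) := hdom'' (Set.mem_univ _)
        obtain ⟨s, ⟨hsU, hsne⟩, hys⟩ := mem_cnbrSet.mp hyd
        have hsy : s ∈ cnbr G (y d) := mem_cnbr_comm.mp hys
        rcases hsU with hsA | hsX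
        · have : s ∈ ({d} : Set V) := by rw [← hy1 d hdA]; exact ⟨hsy, hsA⟩
          exact hsne this
        · obtain ⟨w, hwW, rfl⟩ := hXsub hsX
          exact hkey w hwW d hdA hsy
      · have hsub2 : (A ∪ X) \ {d} ⊆ A ∪ (X \ {d}) := by
          rintro z ⟨hz | hz, hzd⟩
          · exact Or.inl hz
          · exact Or.inr ⟨hz, hzd⟩
        have hdom3 : Dominates G (A ∪ (X \ {d})) Set.univ := fun v hv =>
          cnbrSet_mono hsub2 (hdom'' hv)
        have hXeq : id X = id (X \ {d}) :=
          le_antisymm (hXmin ⟨(Set.diff_subset).trans hXsub, hdom3⟩ Set.diff_subset) Set.diff_subset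
        exact ((show X = X \ {d} from hXeq) ▸ hdX).2 rfl
    · ext z
      constructor
      · exact fun hz => ⟨Or.inl hz, hA hz⟩
      · rintro ⟨hz | hz, hznIR⟩
        · exact hz
        · obtain ⟨w, -, rfl⟩ := hXsub hz
          exact absurd (hgIR w) hznIR
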